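/- Let H be a real Hilbert space, let (e_k)_{k≥1} ⊆ H be unit vectors and (e_k*)_{k≥1} ⊆ H satisfy the biorthogonality relations ⟨e_k*, e_l⟩ = 1 if k = l and 0 otherwise, and define the projections Π_n h := Σ_{k=1}^n ⟨e_k*, h⟩ e_k. Let G ⊆ {−1, 1} × ℕ and define the closed convex cone K := {h ∈ H : θ⟨e_k*, h⟩ ≥ 0 for all (θ, k) ∈ G}. Let (S_t)_{t≥0} be a family of bounded linear operators on H such that: (a) S_t(K) ⊆ K for all t ≥ 0, and (b) (Id − Π_n)(K) ⊆ K for all n ≥ 1. Define D := {((θ, k), h) ∈ G × K : liminf_{t↓0} θ⟨e_k*, S_t h⟩ / t < ∞}. Let n ≥ 1 and let Σ : H → H be a function whose range is contained in span{e_1, …, e_n}, and suppose that for every ((θ, k), h) ∈ D one has liminf_{t↓0} θ⟨e_k*, S_t h⟩ / t + θ⟨e_k*, Σ(h)⟩ ≥ 0. Then for every h ∈ K: liminf_{t↓0} (1/t) · d_K(S_t h + t Σ(h)) = 0, where d_K(x) := inf_{g ∈ K} ‖x − g‖. -/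

import Mathlib

open Filter Topology Metric
open scoped RealInnerProductSpace
open scoped Classical


noncomputable def sgnCorr (g1 g2 : Prop) (x : ℝ) : ℝ :=
  (if g1 then max (-x) 0 else 0) - (if g2 then max x 0 else 0)

lemma sgnCorr_pos {g1 : Prop} (g2 : Prop) (x : ℝ) (h1 : g1) : 0 ≤ x + sgnCorr g1 g2 x := by
  unfold sgnCorr
  rw [if_pos h1]
  by_cases h2 : g2 <;> rcases le_total 0 x with hx | hx <;>
    simp [h2, max_eq_left, max_eq_right, neg_nonpos.mpr, neg_nonneg.mpr, hx]

lemma sgnCorr_neg (g1 : Prop) {g2 : Prop} (x : ℝ) (h2 : g2) : x + sgnCorr g1 g2 x ≤ 0 := by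
  unfold sgnCorr
  rw [if_pos h2]
  by_cases h1 : g1 <;> rcases le_total 0 x with hx | hx <;>
    simp [h1, max_eq_left, max_eq_right, neg_nonpos.mpr, neg_nonneg.mpr, hx]

lemma sgnCorr_abs_le (g1 g2 : Prop) (x : ℝ) :
    |sgnCorr g1 g2 x| ≤ (if g1 then max (-x) 0 else 0) + (if g2 then max x 0 else 0) := by
  unfold sgnCorr
  have h1 : (0:ℝ) ≤ (if g1 then max (-x) 0 else 0) := by positivity
  have h2 : (0:ℝ) ≤ (if g2 then max x 0 else 0) := by positivity
  rw [abs_sub_le_iff]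
  constructor <;> linarith


/-- the stochastic semigroup Nagumo condition. `K` is the closed convex cone
generated by a biorthogonal system `{e_k*, e_k}` and a set `G` of signed coordinates; if `K`
is invariant for the semigroup and for the complementary projections `Id - Π_n`, and the
finite-rank drift `Σ` is inward pointing on the set `D`, then
`liminf_{t ↓ 0} d_K(S_t h + t Σ(h)) / t = 0` for every `h ∈ K`. -/
theorem stochastic_semigroup_nagumo_condition
    {H : Type*} [NormedAddCommGroup H] [InnerProductSpace ℝ H]
    (e estar : ℕ → H) (hnorm : ∀ k, ‖e k‖ = 1)
    (hbi : ∀ k l, ⟪estar k, e l⟫ = if k = l then (1 : ℝ) else 0)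
    (G : Set (ℝ × ℕ)) (hG : ∀ p ∈ G, p.1 = -1 ∨ p.1 = 1)
    (K : Set H) (hK : K = {h : H | ∀ p ∈ G, 0 ≤ p.1 * ⟪estar p.2, h⟫})
    (S : ℝ → H →L[ℝ] H)
    (hInv : ∀ t : ℝ, 0 ≤ t → ∀ h ∈ K, S t h ∈ K)
    (hProjInv : ∀ n : ℕ, 1 ≤ n → ∀ h ∈ K,
      h - ∑ k ∈ Finset.Icc 1 n, ⟪estar k, h⟫ • e k ∈ K)
    (D : Set ((ℝ × ℕ) × H))
    (hD : D = {q : (ℝ × ℕ) × H | q.1 ∈ G ∧ q.2 ∈ K ∧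
      liminf (fun t : ℝ => ((q.1.1 * ⟪estar q.1.2, S t q.2⟫ / t : ℝ) : EReal))
        (𝓝[>] (0 : ℝ)) < ⊤})
    (n : ℕ) (hn : 1 ≤ n) (Sig : H → H)
    (hrange : ∀ h : H, Sig h ∈ Submodule.span ℝ (e '' Set.Icc 1 n))
    (hdrift : ∀ q ∈ D,
      0 ≤ liminf (fun t : ℝ => ((q.1.1 * ⟪estar q.1.2, S t q.2⟫ / t : ℝ) : EReal))
            (𝓝[>] (0 : ℝ))
          + ((q.1.1 * ⟪estar q.1.2, Sig q.2⟫ : ℝ) : EReal)) :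
    ∀ h ∈ K,
      liminf (fun t : ℝ => ((infDist (S t h + t • Sig h) K / t : ℝ) : EReal))
        (𝓝[>] (0 : ℝ)) = 0 := by
  intro h hh
  classical
  -- coordinates of Sig h vanish outside [1, n]
  have hσ0 : ∀ l : ℕ, l ∉ Finset.Icc 1 n → ⟪estar l, Sig h⟫ = 0 := by
    intro l hl
    have hsub : e '' Set.Icc 1 n ⊆ (LinearMap.ker ((innerSL ℝ (estar l)).toLinearMap) : Set H) := by
      rintro _ ⟨k, hk, rfl⟩
      have : l ≠ k := by
        rintro rfl
        exact hl (Finset.mem_Icc.mpr ⟨hk.1, hk.2⟩)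
      simp [LinearMap.mem_ker, hbi l k, if_neg this]
    have := Submodule.span_le.mpr hsub (hrange h)
    simpa [LinearMap.mem_ker] using this
  -- the coordinate functions
  set a : ℕ → ℝ → ℝ := fun k t => ⟪estar k, S t h⟫ + t * ⟪estar k, Sig h⟫ with ha_def
  -- key coordinate estimate
  have key : ∀ θ : ℝ, ∀ k : ℕ, (θ, k) ∈ G → ∀ ε : ℝ, 0 < ε →
      ∀ᶠ t in 𝓝[>] (0:ℝ), -ε < θ * a k t / t := by
    intro θ k hθk ε hε
    have hev : ∀ᶠ t in 𝓝[>] (0:ℝ),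
        ((-(θ * ⟪estar k, Sig h⟫) - ε : ℝ) : EReal)
          < ((θ * ⟪estar k, S t h⟫ / t : ℝ) : EReal) := by
      by_cases hd : ((θ, k), h) ∈ D
      · have h1 := hdrift _ hd
        simp only at h1
        have h2 : liminf (fun t : ℝ => ((θ * ⟪estar k, S t h⟫ / t : ℝ) : EReal))
            (𝓝[>] (0:ℝ)) < ⊤ := by
          rw [hD] at hd; exact hd.2.2
        set L := liminf (fun t : ℝ => ((θ * ⟪estar k, S t h⟫ / t : ℝ) : EReal))
            (𝓝[>] (0:ℝ)) with hL
        have hbot : L ≠ ⊥ := by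
          intro hb
          rw [hb] at h1
          simp [EReal.bot_add] at h1
        refine eventually_lt_of_lt_liminf ?_
        rw [← hL]
        lift L to ℝ using ⟨h2.ne, hbot⟩ with c
        rw [← EReal.coe_add] at h1
        have hc : (0:ℝ) ≤ c + θ * ⟪estar k, Sig h⟫ := by exact_mod_cast h1
        exact_mod_cast (by linarith : -(θ * ⟪estar k, Sig h⟫) - ε < c)
      · have hLtop : liminf (fun t : ℝ => ((θ * ⟪estar k, S t h⟫ / t : ℝ) : EReal))
            (𝓝[>] (0:ℝ)) = ⊤ := by
          by_contra hne
          exact hd (by rw [hD]; exact ⟨hθk, hh, lt_top_iff_ne_top.mpr hne⟩)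
        exact eventually_lt_of_lt_liminf (hLtop ▸ EReal.coe_lt_top _)
    filter_upwards [hev, self_mem_nhdsWithin] with t ht ht0
    have ht0' : (0:ℝ) < t := ht0
    have hreal : -(θ * ⟪estar k, Sig h⟫) - ε < θ * ⟪estar k, S t h⟫ / t :=
      EReal.coe_lt_coe_iff.mp ht
    have : θ * a k t / t = θ * ⟪estar k, S t h⟫ / t + θ * ⟪estar k, Sig h⟫ := by
      field_simp [ha_def]
      ring
    rw [this]
    linarith
  -- each correction term tends to zero
  have hpos : ∀ θ : ℝ, ∀ k : ℕ, (θ, k) ∈ G →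
      Tendsto (fun t => max (-(θ * a k t)) 0 / t) (𝓝[>] (0:ℝ)) (𝓝 0) := by
    intro θ k hθk
    rw [Metric.tendsto_nhds]
    intro ε hε
    filter_upwards [key θ k hθk (ε/2) (by positivity), self_mem_nhdsWithin] with t h1 h2
    have ht : (0:ℝ) < t := h2
    have h3 : -(θ * a k t) < ε/2 * t := by
      have := (lt_div_iff₀ ht).mp h1
      linarith
    have h4 : max (-(θ * a k t)) 0 ≤ ε/2 * t := max_le h3.le (by positivity)
    rw [Real.dist_eq, sub_zero, abs_of_nonneg (by positivity)]
    rw [div_lt_iff₀ ht]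
    nlinarith
  -- the correction function and error
  set δ : ℕ → ℝ → ℝ := fun k t =>
    sgnCorr (((1:ℝ), k) ∈ G) (((-1:ℝ), k) ∈ G) (a k t) with hδ_def
  set err : ℝ → ℝ := fun t => ∑ k ∈ Finset.Icc 1 n,
    ((if ((1:ℝ), k) ∈ G then max (-(a k t)) 0 else 0)
      + (if ((-1:ℝ), k) ∈ G then max (a k t) 0 else 0)) with herr_def
  -- err / t → 0
  have herr : Tendsto (fun t => err t / t) (𝓝[>] (0:ℝ)) (𝓝 0) := by
    have : ∀ t : ℝ, err t / t = ∑ k ∈ Finset.Icc 1 n,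
        ((if ((1:ℝ), k) ∈ G then max (-(a k t)) 0 else 0) / t
          + (if ((-1:ℝ), k) ∈ G then max (a k t) 0 else 0) / t) := by
      intro t
      rw [herr_def]
      simp only [Finset.sum_div, add_div]
    rw [funext this]
    have hterm : ∀ k ∈ Finset.Icc 1 n, Tendsto (fun t =>
        (if ((1:ℝ), k) ∈ G then max (-(a k t)) 0 else 0) / t
          + (if ((-1:ℝ), k) ∈ G then max (a k t) 0 else 0) / t)
        (𝓝[>] (0:ℝ)) (𝓝 (0 + 0)) := by
      refine fun k _ => Tendsto.add ?_ ?_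
      · by_cases hg : ((1:ℝ), k) ∈ G
        · simp only [if_pos hg]
          have := hpos 1 k hg
          simpa using this
        · simp [if_neg hg, tendsto_const_nhds]
      · by_cases hg : ((-1:ℝ), k) ∈ G
        · simp only [if_pos hg]
          have := hpos (-1) k hg
          simp only [neg_mul, one_mul, neg_neg] at this
          exact this
        · simp [if_neg hg, tendsto_const_nhds]
    have := tendsto_finset_sum (Finset.Icc 1 n) hterm
    simpa using this
  -- coordinates of the corrected point
  have hcoord : ∀ (l : ℕ) (t : ℝ),
      ⟪estar l, S t h + t • Sig h + ∑ k ∈ Finset.Icc 1 n, δ k t • e k⟫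
        = a l t + (if l ∈ Finset.Icc 1 n then δ l t else 0) := by
    intro l t
    rw [inner_add_right, inner_add_right, real_inner_smul_right, inner_sum]
    simp only [real_inner_smul_right, hbi]
    rw [ha_def]
    congr 1
    rw [Finset.sum_congr rfl (fun k _ => by rw [mul_ite, mul_one, mul_zero])]
    exact Finset.sum_ite_eq _ _ _
  -- the corrected point lies in K
  have hmem : ∀ t : ℝ, 0 < t →
      S t h + t • Sig h + ∑ k ∈ Finset.Icc 1 n, δ k t • e k ∈ K := by
    intro t ht
    rw [hK]
    rintro ⟨θ, l⟩ hpl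
    simp only [Set.mem_setOf_eq]
    rw [hcoord l t]
    by_cases hl : l ∈ Finset.Icc 1 n
    · rw [if_pos hl]
      rcases hG _ hpl with hθ | hθ <;> simp only at hθ <;> subst hθ
      · have := sgnCorr_neg (((1:ℝ), l) ∈ G) (a l t) hpl
        rw [hδ_def]
        nlinarith
      · have := sgnCorr_pos (((-1:ℝ), l) ∈ G) (a l t) hpl
        rw [hδ_def]
        nlinarith
    · rw [if_neg hl, add_zero]
      have hσ := hσ0 l hl
      have ha' : a l t = ⟪estar l, S t h⟫ := by rw [ha_def]; simp [hσ]
      rw [ha']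
      have hs := hInv t ht.le h hh
      rw [hK] at hs
      exact hs (θ, l) hpl
  -- distance bound
  have hbound : ∀ t : ℝ, 0 < t → infDist (S t h + t • Sig h) K ≤ err t := by
    intro t ht
    have h1 := infDist_le_dist_of_mem (x := S t h + t • Sig h) (hmem t ht)
    rw [dist_eq_norm] at h1
    have h2 : S t h + t • Sig h -
        (S t h + t • Sig h + ∑ k ∈ Finset.Icc 1 n, δ k t • e k)
        = -(∑ k ∈ Finset.Icc 1 n, δ k t • e k) := by abel
    rw [h2, norm_neg] at h1
    refine h1.trans ?_
    refine (norm_sum_le _ _).trans ?_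
    rw [herr_def]
    refine Finset.sum_le_sum fun k _ => ?_
    rw [norm_smul, hnorm k, mul_one, Real.norm_eq_abs, hδ_def]
    exact sgnCorr_abs_le _ _ _
  -- squeeze
  have htend : Tendsto (fun t => infDist (S t h + t • Sig h) K / t)
      (𝓝[>] (0:ℝ)) (𝓝 0) := by
    refine squeeze_zero' ?_ ?_ herr
    · filter_upwards [self_mem_nhdsWithin] with t ht
      have ht' : (0:ℝ) < t := ht
      exact div_nonneg infDist_nonneg ht'.le
    · filter_upwards [self_mem_nhdsWithin] with t ht
      have ht' : (0:ℝ) < t := ht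
      exact (div_le_div_iff_of_pos_right ht').mpr (hbound t ht')
  have : Tendsto (fun t : ℝ => ((infDist (S t h + t • Sig h) K / t : ℝ) : EReal))
      (𝓝[>] (0:ℝ)) (𝓝 ((0:ℝ) : EReal)) := EReal.tendsto_coe.mpr htend
  simpa using this.liminf_eq
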